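/- arXiv:2403.04941 — 4 statements merged into one kernel-verified Lean document; each statement's English description precedes it below -/
import Mathlib

section
/- Fix n ≥ 1. Every group homomorphism χ : H_n → ℝ from the Houghton group H_n to the additive group of real numbers is a linear combination of the translation amounts: there exist real numbers a₁,…,a_n such that χ(σ) = a₁·m₁(σ) + ⋯ + a_n·m_n(σ) for every σ ∈ H_n. In particular, every group homomorphism H_n → ℝ vanishes on all finitely supported elements of H_n. -/
/-- A permutation `σ` of `Fin n × ℕ` is an *eventual translation* if there are integers
`m₁, …, m_n` and a finite set `F ⊆ Fin n × ℕ` such that `σ (i, k) = (i, k + mᵢ)` for all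
`(i, k) ∉ F`. -/
def IsEventualTranslation {n : ℕ} (σ : Equiv.Perm (Fin n × ℕ)) : Prop :=
  ∃ (m : Fin n → ℤ) (F : Finset (Fin n × ℕ)),
    ∀ p : Fin n × ℕ, p ∉ F →
      (σ p).1 = p.1 ∧ ((σ p).2 : ℤ) = (p.2 : ℤ) + m p.1

/-- The Houghton group `H_n`: the subgroup of `Equiv.Perm (Fin n × ℕ)` consisting of the
eventual translations. -/
def HoughtonGroup (n : ℕ) : Subgroup (Equiv.Perm (Fin n × ℕ)) where
  carrier := {σ | IsEventualTranslation σ}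
  one_mem' := ⟨0, ∅, fun p _ => by simp⟩
  mul_mem' := by
    rintro a b ⟨m, F, hF⟩ ⟨m', F', hF'⟩
    refine ⟨m + m', F' ∪ F.preimage b b.injective.injOn, fun p hp => ?_⟩
    simp only [Finset.mem_union, Finset.mem_preimage, not_or] at hp
    obtain ⟨hp1, hp2⟩ := hp
    obtain ⟨hb1, hb2⟩ := hF' p hp1
    obtain ⟨ha1, ha2⟩ := hF (b p) hp2
    refine ⟨by simp [Equiv.Perm.mul_apply, ha1, hb1], ?_⟩
    simp only [Equiv.Perm.mul_apply, Pi.add_apply]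
    rw [ha2, hb2, hb1]
    ring
  inv_mem' := by
    rintro a ⟨m, F, hF⟩
    refine ⟨-m, F.image a, fun p hp => ?_⟩
    have hmem : a⁻¹ p ∉ F := by
      intro h
      exact hp (Finset.mem_image.mpr ⟨a⁻¹ p, h, a.apply_symm_apply p⟩)
    obtain ⟨h1, h2⟩ := hF (a⁻¹ p) hmem
    rw [show a (a⁻¹ p) = p from a.apply_symm_apply p] at h1 h2
    refine ⟨h1.symm, ?_⟩
    rw [← h1] at h2
    simp only [Pi.neg_apply]
    omega

/-- The (uniquely determined) vector of eventual translation amounts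
`(m₁(σ), …, m_n(σ))` of an element `σ` of the Houghton group. -/
noncomputable def translationVector {n : ℕ} (σ : HoughtonGroup n) : Fin n → ℤ :=
  Classical.choose (show IsEventualTranslation (σ : Equiv.Perm (Fin n × ℕ)) from σ.2)

namespace HoughtonAux

variable {n : ℕ}

lemma exists_not_mem (i : Fin n) (F : Finset (Fin n × ℕ)) : ∃ k : ℕ, (i, k) ∉ F := by
  refine ⟨(F.image Prod.snd).sup id + 1, fun h => ?_⟩
  have := Finset.le_sup (f := id) (Finset.mem_image_of_mem Prod.snd h)
  simp only [id] at this
  omega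

lemma tv_spec (σ : HoughtonGroup n) :
    ∃ F : Finset (Fin n × ℕ), ∀ p ∉ F,
      ((σ : Equiv.Perm (Fin n × ℕ)) p).1 = p.1 ∧
      (((σ : Equiv.Perm (Fin n × ℕ)) p).2 : ℤ) = (p.2 : ℤ) + translationVector σ p.1 :=
  Classical.choose_spec
    (show IsEventualTranslation (σ : Equiv.Perm (Fin n × ℕ)) from σ.2)

lemma tv_unique (σ : HoughtonGroup n) (m : Fin n → ℤ) (F : Finset (Fin n × ℕ))
    (h : ∀ p ∉ F, ((σ : Equiv.Perm (Fin n × ℕ)) p).1 = p.1 ∧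
      (((σ : Equiv.Perm (Fin n × ℕ)) p).2 : ℤ) = (p.2 : ℤ) + m p.1) :
    translationVector σ = m := by
  obtain ⟨F', hF'⟩ := tv_spec σ
  funext i
  obtain ⟨k, hk⟩ := exists_not_mem i (F ∪ F')
  simp only [Finset.mem_union, not_or] at hk
  have h1 : (((σ : Equiv.Perm (Fin n × ℕ)) (i, k)).2 : ℤ) = (k : ℤ) + m i := (h (i, k) hk.1).2
  have h2 : (((σ : Equiv.Perm (Fin n × ℕ)) (i, k)).2 : ℤ) = (k : ℤ) + translationVector σ i :=
    (hF' (i, k) hk.2).2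
  omega

lemma tv_mul (σ τ : HoughtonGroup n) :
    translationVector (σ * τ) = translationVector σ + translationVector τ := by
  obtain ⟨F, hF⟩ := tv_spec σ
  obtain ⟨F', hF'⟩ := tv_spec τ
  refine tv_unique _ _ (F' ∪ F.preimage (τ : Equiv.Perm (Fin n × ℕ))
    ((τ : Equiv.Perm (Fin n × ℕ)).injective.injOn)) (fun p hp => ?_)
  simp only [Finset.mem_union, Finset.mem_preimage, not_or] at hp
  obtain ⟨hb1, hb2⟩ := hF' p hp.1
  obtain ⟨ha1, ha2⟩ := hF ((τ : Equiv.Perm (Fin n × ℕ)) p) hp.2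
  have hco : ((σ * τ : HoughtonGroup n) : Equiv.Perm (Fin n × ℕ)) p
      = (σ : Equiv.Perm (Fin n × ℕ)) ((τ : Equiv.Perm (Fin n × ℕ)) p) := rfl
  rw [hco]
  refine ⟨by rw [ha1, hb1], ?_⟩
  simp only [Pi.add_apply]
  rw [ha2, hb2, hb1]
  ring

lemma tv_one : translationVector (1 : HoughtonGroup n) = 0 :=
  tv_unique _ 0 ∅ (fun p _ => by simp)

noncomputable def Φ : HoughtonGroup n →* Multiplicative (Fin n → ℤ) :=
  MonoidHom.mk' (fun σ => Multiplicative.ofAdd (translationVector σ))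
    (fun a b => congrArg Multiplicative.ofAdd (tv_mul a b))

lemma tv_inv (σ : HoughtonGroup n) : translationVector σ⁻¹ = - translationVector σ := by
  have : Φ σ⁻¹ = (Φ σ)⁻¹ := map_inv Φ σ
  exact congrArg Multiplicative.toAdd this

lemma mem_of_support_subset (σ : Equiv.Perm (Fin n × ℕ)) (s : Finset (Fin n × ℕ))
    (h : ∀ p ∉ s, σ p = p) : σ ∈ HoughtonGroup n :=
  ⟨0, s, fun p hp => by rw [h p hp]; simp⟩

lemma tv_eq_zero_of_finitary (σ : HoughtonGroup n) (s : Finset (Fin n × ℕ))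
    (h : ∀ p ∉ s, (σ : Equiv.Perm (Fin n × ℕ)) p = p) : translationVector σ = 0 :=
  tv_unique σ 0 s (fun p hp => by rw [h p hp]; simp)

lemma finitary_of_tv_eq_zero (σ : HoughtonGroup n) (h : translationVector σ = 0) :
    {x : Fin n × ℕ | (σ : Equiv.Perm (Fin n × ℕ)) x ≠ x}.Finite := by
  obtain ⟨F, hF⟩ := tv_spec σ
  refine Set.Finite.subset F.finite_toSet (fun p hp => ?_)
  by_contra hpF
  obtain ⟨h1, h2⟩ := hF p hpF
  rw [h] at h2
  simp only [Pi.zero_apply, add_zero, Nat.cast_inj] at h2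
  exact hp (Prod.ext h1 h2)

/-- a permutation of the Houghton group all whose translation amounts are `≤ 0`
has all translation amounts `= 0`. -/
lemma tv_eq_zero_of_nonpos (σ : HoughtonGroup n)
    (hm : ∀ i, translationVector σ i ≤ 0) (i : Fin n) : translationVector σ i = 0 := by
  by_contra hne
  have hic : translationVector σ i ≤ -1 := by have := hm i; omega
  obtain ⟨F, hF⟩ := tv_spec σ
  set u : Equiv.Perm (Fin n × ℕ) := (σ : Equiv.Perm (Fin n × ℕ)) with hu
  set N : ℕ := 2 + F.sup (fun p => max p.2 (u p).2) with hN
  have hN1 : ∀ p ∈ F, p.2 < N := by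
    intro p hp
    have h := Finset.le_sup (f := fun p => max p.2 (u p).2) hp
    have : p.2 ≤ F.sup (fun p => max p.2 (u p).2) := le_trans (le_max_left _ _) h
    omega
  have hN2 : ∀ p ∈ F, (u p).2 + 1 < N := by
    intro p hp
    have h := Finset.le_sup (f := fun p => max p.2 (u p).2) hp
    have : (u p).2 ≤ F.sup (fun p => max p.2 (u p).2) := le_trans (le_max_right _ _) h
    omega
  set T : Finset (Fin n × ℕ) := Finset.univ ×ˢ Finset.range N with hT
  have hmaps : ∀ p ∈ T, u p ∈ T := by
    intro p hp
    simp only [hT, Finset.mem_product, Finset.mem_univ, Finset.mem_range, true_and] at hp ⊢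
    by_cases hpF : p ∈ F
    · have := hN2 p hpF; omega
    · obtain ⟨h1, h2⟩ := hF p hpF
      have := hm p.1
      omega
  have hsurj := Finset.surj_on_of_inj_on_of_card_le (s := T) (t := T)
    (fun p _ => u p) (fun p hp => hmaps p hp)
    (fun p q _ _ hpq => u.injective hpq) le_rfl
  have hqT : (i, N - 1) ∈ T := by
    simp only [hT, Finset.mem_product, Finset.mem_univ, Finset.mem_range, true_and]
    omega
  obtain ⟨p, hpT, hq⟩ := hsurj (i, N - 1) hqT
  have hq' : u p = (i, N - 1) := by simpa using hq.symm
  have hpF : p ∉ F := by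
    intro hpF
    have := hN2 p hpF
    rw [hq'] at this
    simp only at this
    omega
  obtain ⟨h1, h2⟩ := hF p hpF
  have hp1 : p.1 = i := by rw [← h1, hq']
  have hpN : p.2 < N := by
    simp only [hT, Finset.mem_product, Finset.mem_range] at hpT
    exact hpT.2
  have hup2 : (u p).2 = N - 1 := by rw [hq']
  rw [hup2, hp1] at h2
  omega

end HoughtonAux

namespace HoughtonAux

variable {n : ℕ}

/-- The permutation shifting ray `i` up by one, ray `i0` down by one, moving `(i0,0)` to
`(i,0)`. -/
def shiftPerm (i0 i : Fin n) (hne : i ≠ i0) : Equiv.Perm (Fin n × ℕ) where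
  toFun p :=
    if p.1 = i then (i, p.2 + 1)
    else if p.1 = i0 then (if p.2 = 0 then (i, 0) else (i0, p.2 - 1))
    else p
  invFun q :=
    if q.1 = i then (if q.2 = 0 then (i0, 0) else (i, q.2 - 1))
    else if q.1 = i0 then (i0, q.2 + 1)
    else q
  left_inv := by
    rintro ⟨j, k⟩
    by_cases hj : j = i
    · subst hj
      simp [hne]
    · by_cases hj0 : j = i0
      · subst hj0
        rcases Nat.eq_zero_or_pos k with hk | hk
        · subst hk
          simp [hne, Ne.symm hne, hj]
        · have hk0 : k ≠ 0 := Nat.pos_iff_ne_zero.mp hk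
          simp only [hj, if_false, if_true, hk0, if_neg hne]
          simp [hne, Ne.symm hne, hk0, Nat.succ_pred_eq_of_pos hk]
          omega
      · simp [hj, hj0]
  right_inv := by
    rintro ⟨j, k⟩
    by_cases hj : j = i
    · subst hj
      rcases Nat.eq_zero_or_pos k with hk | hk
      · subst hk
        simp [hne, Ne.symm hne]
      · have hk0 : k ≠ 0 := Nat.pos_iff_ne_zero.mp hk
        simp only [if_pos rfl, if_neg hk0]
        simp [hne]
        omega
    · by_cases hj0 : j = i0
      · subst hj0
        simp [hne, Ne.symm hne, hj]
      · simp [hj, hj0]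

lemma shiftPerm_apply (i0 i : Fin n) (hne : i ≠ i0) (p : Fin n × ℕ) :
    shiftPerm i0 i hne p =
      (if p.1 = i then (i, p.2 + 1)
       else if p.1 = i0 then (if p.2 = 0 then (i, 0) else (i0, p.2 - 1))
       else p) := rfl

lemma shiftPerm_cond (i0 i : Fin n) (hne : i ≠ i0) :
    ∀ p ∉ ({(i0, 0)} : Finset (Fin n × ℕ)),
      (shiftPerm i0 i hne p).1 = p.1 ∧
      ((shiftPerm i0 i hne p).2 : ℤ) = (p.2 : ℤ) +
        (fun j => if j = i then (1 : ℤ) else if j = i0 then -1 else 0) p.1 := by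
  rintro ⟨j, k⟩ hp
  simp only [Finset.mem_singleton] at hp
  by_cases hj : j = i
  · subst hj
    simp [shiftPerm_apply]
  · by_cases hj0 : j = i0
    · have hk0 : k ≠ 0 := fun h => hp (by rw [hj0, h])
      have hi0 : ¬ (i0 = i) := fun h => hj (hj0.trans h)
      simp [shiftPerm_apply, hj, hj0, hk0, hi0]
      omega
    · simp [shiftPerm_apply, hj, hj0]

lemma shiftPerm_mem (i0 i : Fin n) (hne : i ≠ i0) : shiftPerm i0 i hne ∈ HoughtonGroup n :=
  ⟨fun j => if j = i then 1 else if j = i0 then -1 else 0, {(i0, 0)},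
    fun p hp => shiftPerm_cond i0 i hne p hp⟩

noncomputable def gElt (i0 i : Fin n) : HoughtonGroup n :=
  if hne : i = i0 then 1 else ⟨shiftPerm i0 i hne, shiftPerm_mem i0 i hne⟩

lemma tv_gElt (i0 i : Fin n) (hne : i ≠ i0) :
    translationVector (gElt i0 i) = fun j => if j = i then 1 else if j = i0 then -1 else 0 := by
  rw [gElt]
  refine tv_unique _ _ {(i0, 0)} ?_
  intro p hp
  have h := shiftPerm_cond i0 i hne p hp
  simp only [dif_neg hne]
  exact h

end HoughtonAux

/-- Every group homomorphism `χ : H_n → ℝ` (`ℝ` additive) is a linear combination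
`χ(σ) = a₁ m₁(σ) + ⋯ + a_n m_n(σ)` of the translation amounts; in particular `χ` vanishes
on every finitely supported element of `H_n`. -/
theorem houghton_characters (n : ℕ) (hn : 1 ≤ n) (χ : HoughtonGroup n → ℝ)
    (hχ : ∀ σ τ : HoughtonGroup n, χ (σ * τ) = χ σ + χ τ) :
    (∃ a : Fin n → ℝ,
      ∀ σ : HoughtonGroup n, χ σ = ∑ i, a i * (translationVector σ i : ℝ)) ∧
    (∀ σ : HoughtonGroup n,
      {x : Fin n × ℕ | (σ : Equiv.Perm (Fin n × ℕ)) x ≠ x}.Finite → χ σ = 0) := by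
  classical
  open HoughtonAux in
  have hone : χ 1 = 0 := by have := hχ 1 1; simp only [mul_one] at this; linarith
  have hinv2 : ∀ τ : HoughtonGroup n, τ * τ = 1 → χ τ = 0 := by
    intro τ h
    have := hχ τ τ
    rw [h, hone] at this
    linarith
  have hfin : ∀ σ : HoughtonGroup n,
      {x : Fin n × ℕ | (σ : Equiv.Perm (Fin n × ℕ)) x ≠ x}.Finite → χ σ = 0 := by
    have key : ∀ (k : ℕ) (σ : HoughtonGroup n) (s : Finset (Fin n × ℕ)),
        s.card ≤ k → (∀ p, (σ : Equiv.Perm (Fin n × ℕ)) p ≠ p → p ∈ s) → χ σ = 0 := by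
      intro k
      induction k with
      | zero =>
        intro σ s hcard hsupp
        have hs : s = ∅ := Finset.card_eq_zero.mp (Nat.le_zero.mp hcard)
        have hσ : σ = 1 := by
          apply Subtype.ext
          apply Equiv.ext
          intro p
          by_contra hp
          have := hsupp p hp
          rw [hs] at this
          exact absurd this (Finset.notMem_empty p)
        rw [hσ]; exact hone
      | succ k ih =>
        intro σ s hcard hsupp
        by_cases hσ : σ = 1
        · rw [hσ]; exact hone
        · have hex : ∃ x, (σ : Equiv.Perm (Fin n × ℕ)) x ≠ x := by
            by_contra h
            push_neg at h
            exact hσ (Subtype.ext (Equiv.ext h))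
          obtain ⟨x, hx⟩ := hex
          set u := (σ : Equiv.Perm (Fin n × ℕ)) with hu
          have hswapmem : Equiv.swap x (u x) ∈ HoughtonGroup n := by
            apply mem_of_support_subset _ {x, u x}
            intro p hp
            simp only [Finset.mem_insert, Finset.mem_singleton, not_or] at hp
            exact Equiv.swap_apply_of_ne_of_ne hp.1 hp.2
          set t : HoughtonGroup n := ⟨Equiv.swap x (u x), hswapmem⟩ with hts
          have ht2 : t * t = 1 := by
            apply Subtype.ext
            show Equiv.swap x (u x) * Equiv.swap x (u x) = 1
            exact Equiv.swap_mul_self _ _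
          have hsupp' : ∀ p, ((t * σ : HoughtonGroup n) : Equiv.Perm (Fin n × ℕ)) p ≠ p →
              p ∈ s.erase x := by
            intro p hp
            have hp' : Equiv.swap x (u x) (u p) ≠ p := hp
            refine Finset.mem_erase.mpr ⟨?_, ?_⟩
            · intro hpx
              apply hp'
              rw [hpx]
              exact Equiv.swap_apply_right x (u x)
            · apply hsupp
              intro hup
              apply hp'
              rw [hup]
              apply Equiv.swap_apply_of_ne_of_ne
              · intro hpx; rw [hpx] at hup; exact hx hup
              · intro hpux
                apply hx
                apply u.injective
                rw [← hpux, hup]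
          have hxs : x ∈ s := hsupp x hx
          have hcard' : (s.erase x).card ≤ k := by
            have := Finset.card_erase_of_mem hxs
            omega
          have h0 := ih (t * σ) (s.erase x) hcard' hsupp'
          have hm := hχ t σ
          rw [h0, hinv2 t ht2] at hm
          linarith
    intro σ hσ
    exact key hσ.toFinset.card σ hσ.toFinset le_rfl
      (fun p hp => hσ.mem_toFinset.mpr hp)
  refine ⟨?_, hfin⟩
  set i0 : Fin n := ⟨0, hn⟩ with hi0
  refine ⟨fun i => χ (gElt i0 i), ?_⟩
  intro σ
  set m := translationVector σ with hmm
  set h : HoughtonGroup n :=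
    ((Finset.univ.erase i0).toList.map (fun i => (gElt i0 i) ^ (m i))).prod with hh
  have tvh : translationVector h
      = ∑ i ∈ Finset.univ.erase i0, m i • translationVector (gElt i0 i) := by
    have h1 : Φ h
        = ((Finset.univ.erase i0).toList.map (fun i => Φ ((gElt i0 i) ^ (m i)))).prod := by
      rw [hh, map_list_prod, List.map_map]; rfl
    have h2 : translationVector h = (Φ h).toAdd := rfl
    rw [h2, h1, toAdd_list_sum, List.map_map, ← Finset.sum_map_toList]
    refine congrArg List.sum (List.map_congr_left (fun i _ => ?_))
    show (Φ ((gElt i0 i) ^ (m i))).toAdd = _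
    rw [map_zpow, toAdd_zpow]
    rfl
  have tvh_apply : ∀ j, translationVector h j
      = ∑ i ∈ Finset.univ.erase i0, m i * (if j = i then 1 else if j = i0 then -1 else 0) := by
    intro j
    rw [tvh, Finset.sum_apply]
    refine Finset.sum_congr rfl (fun i hi => ?_)
    have hi' : i ≠ i0 := (Finset.mem_erase.mp hi).1
    rw [Pi.smul_apply, tv_gElt i0 i hi', smul_eq_mul]
  have tvh_j : ∀ j, j ≠ i0 → translationVector h j = m j := by
    intro j hj
    rw [tvh_apply, Finset.sum_eq_single j]
    · simp
    · intro i hi hij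
      simp [Ne.symm hij, hj]
    · intro hj'
      exact absurd (Finset.mem_erase.mpr ⟨hj, Finset.mem_univ j⟩) hj'
  set τ : HoughtonGroup n := h⁻¹ * σ with hτdef
  have tvτ : translationVector τ = - translationVector h + m := by
    rw [hτdef, tv_mul, tv_inv, hmm]
  have hτj : ∀ j, j ≠ i0 → translationVector τ j = 0 := by
    intro j hj
    rw [tvτ]
    simp [tvh_j j hj]
  have hτ0 : translationVector τ i0 = 0 := by
    rcases le_or_gt (translationVector τ i0) 0 with hc | hc
    · apply tv_eq_zero_of_nonpos
      intro i
      by_cases hi : i = i0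
      · rw [hi]; exact hc
      · rw [hτj i hi]
    · exfalso
      have h1 : ∀ i, translationVector τ⁻¹ i ≤ 0 := by
        intro i
        rw [tv_inv]
        by_cases hi : i = i0
        · rw [hi]; simp; omega
        · simp [hτj i hi]
      have h2 := tv_eq_zero_of_nonpos τ⁻¹ h1 i0
      rw [tv_inv] at h2
      simp only [Pi.neg_apply, neg_eq_zero] at h2
      omega
  have hτ_zero : translationVector τ = 0 := by
    funext j
    by_cases hj : j = i0
    · rw [hj]; exact hτ0
    · exact hτj j hj
  have hχτ : χ τ = 0 := hfin τ (finitary_of_tv_eq_zero τ hτ_zero)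
  have hσ_eq : h * τ = σ := by rw [hτdef]; group
  have hχσ : χ σ = χ h := by
    have := hχ h τ
    rw [hσ_eq, hχτ, add_zero] at this
    exact this
  set X : HoughtonGroup n →* Multiplicative ℝ :=
    MonoidHom.mk' (fun σ => Multiplicative.ofAdd (χ σ))
      (fun a b => congrArg Multiplicative.ofAdd (hχ a b)) with hX
  have hχh : χ h = ∑ i ∈ Finset.univ.erase i0, (m i : ℝ) * χ (gElt i0 i) := by
    have h1 : X h
        = ((Finset.univ.erase i0).toList.map (fun i => X ((gElt i0 i) ^ (m i)))).prod := by
      rw [hh, map_list_prod, List.map_map]; rfl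
    have h2 : χ h = (X h).toAdd := rfl
    rw [h2, h1, toAdd_list_sum, List.map_map, ← Finset.sum_map_toList]
    refine congrArg List.sum (List.map_congr_left (fun i _ => ?_))
    show (X ((gElt i0 i) ^ (m i))).toAdd = _
    rw [map_zpow, toAdd_zpow]
    show m i • χ (gElt i0 i) = _
    rw [zsmul_eq_mul]
  have hg0 : χ (gElt i0 i0) = 0 := by
    rw [gElt, dif_pos rfl]
    exact hone
  rw [hχσ, hχh]
  rw [← Finset.sum_erase Finset.univ (f := fun i => χ (gElt i0 i) * (m i : ℝ))
    (by rw [hg0, zero_mul] : χ (gElt i0 i0) * (m i0 : ℝ) = 0)]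
  exact Finset.sum_congr rfl (fun i _ => (mul_comm _ _))
end

section
/- Fix n ≥ 1 and let p be any point of Fin n × ℕ. The stabilizer of p in the Houghton group H_n, namely the subgroup {σ ∈ H_n : σ(p) = p}, is isomorphic as a group to H_n itself, and it has infinite index in H_n. In particular, H_n contains an infinite-index subgroup isomorphic to H_n. -/
/-- The stabilizer of a point `p` in the Houghton group: the subgroup of elements of `H_n`
fixing `p`. -/
def houghtonStabilizer (n : ℕ) (p : Fin n × ℕ) : Subgroup (HoughtonGroup n) where
  carrier := {σ | (σ : Equiv.Perm (Fin n × ℕ)) p = p}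
  one_mem' := rfl
  mul_mem' := by
    intro a b ha hb
    simp only [Set.mem_setOf_eq] at *
    simp [Equiv.Perm.mul_apply, ha, hb]
  inv_mem' := by
    intro a ha
    simp only [Set.mem_setOf_eq] at *
    simp only [Subgroup.coe_inv]
    exact (Equiv.symm_apply_eq _).mpr ha.symm

namespace HoughtonAux

variable {n : ℕ}

def fmap (p x : Fin n × ℕ) : Fin n × ℕ :=
  if x.1 = p.1 ∧ p.2 ≤ x.2 then (x.1, x.2 + 1) else x

def gmap (p x : Fin n × ℕ) : Fin n × ℕ :=
  if x.1 = p.1 ∧ p.2 < x.2 then (x.1, x.2 - 1) else x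

lemma g_f (p x : Fin n × ℕ) : gmap p (fmap p x) = x := by
  rcases x with ⟨i, k⟩; rcases p with ⟨i₀, k₀⟩
  by_cases hi : i = i₀
  · subst hi
    simp only [fmap, gmap, Prod.ext_iff]
    split_ifs <;> simp_all <;> omega
  · simp [fmap, gmap, hi]

lemma f_ne (p x : Fin n × ℕ) : fmap p x ≠ p := by
  rcases x with ⟨i, k⟩; rcases p with ⟨i₀, k₀⟩
  by_cases hi : i = i₀
  · subst hi
    simp only [fmap, Prod.ext_iff]
    split_ifs <;> simp_all <;> omega
  · simp [fmap, hi, Prod.ext_iff]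

lemma f_g (p : Fin n × ℕ) {x : Fin n × ℕ} (h : x ≠ p) : fmap p (gmap p x) = x := by
  rcases x with ⟨i, k⟩; rcases p with ⟨i₀, k₀⟩
  by_cases hi : i = i₀
  · subst hi
    simp only [ne_eq, Prod.ext_iff, not_and, true_and] at h
    simp only [gmap, fmap, Prod.ext_iff]
    split_ifs <;> simp_all <;> omega
  · simp [fmap, gmap, hi]

lemma perm_ne {σ : Equiv.Perm (Fin n × ℕ)} {p x : Fin n × ℕ} (hσ : σ p = p) (h : x ≠ p) :
    σ x ≠ p := fun hc => h (σ.injective (hc.trans hσ.symm))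

/-- Conjugation of a permutation fixing `p` down to a permutation of the full set. -/
def conjPerm (p : Fin n × ℕ) (σ : Equiv.Perm (Fin n × ℕ)) (hσ : σ p = p) :
    Equiv.Perm (Fin n × ℕ) where
  toFun := fun x => gmap p (σ (fmap p x))
  invFun := fun x => gmap p (σ.symm (fmap p x))
  left_inv := fun x => by
    simp only
    rw [f_g p (perm_ne hσ (f_ne p x)), Equiv.symm_apply_apply, g_f]
  right_inv := fun x => by
    have hσ' : σ.symm p = p := (Equiv.symm_apply_eq σ).mpr hσ.symm
    simp only
    rw [f_g p (perm_ne hσ' (f_ne p x)), Equiv.apply_symm_apply, g_f]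

/-- Extension of a permutation to one fixing `p`. -/
def extPerm (p : Fin n × ℕ) (τ : Equiv.Perm (Fin n × ℕ)) : Equiv.Perm (Fin n × ℕ) where
  toFun := fun x => if x = p then p else fmap p (τ (gmap p x))
  invFun := fun x => if x = p then p else fmap p (τ.symm (gmap p x))
  left_inv := fun x => by
    by_cases hx : x = p
    · simp [hx]
    · dsimp only
      rw [if_neg hx, if_neg (f_ne p (τ (gmap p x))), g_f, Equiv.symm_apply_apply, f_g p hx]
  right_inv := fun x => by
    by_cases hx : x = p
    · simp [hx]
    · simp only
      rw [if_neg hx, if_neg (f_ne p (τ.symm (gmap p x))), g_f, Equiv.apply_symm_apply, f_g p hx]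

lemma conj_ext (p : Fin n × ℕ) (τ : Equiv.Perm (Fin n × ℕ)) (x : Fin n × ℕ) :
    conjPerm p (extPerm p τ) (if_pos rfl) x = τ x := by
  simp only [conjPerm, extPerm, Equiv.coe_fn_mk]
  rw [if_neg (f_ne p x), g_f, g_f]

lemma ext_conj (p : Fin n × ℕ) (σ : Equiv.Perm (Fin n × ℕ)) (hσ : σ p = p) (x : Fin n × ℕ) :
    extPerm p (conjPerm p σ hσ) x = σ x := by
  simp only [conjPerm, extPerm, Equiv.coe_fn_mk]
  by_cases hx : x = p
  · simp [hx, hσ]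
  · rw [if_neg hx, f_g p hx, f_g p (perm_ne hσ hx)]

lemma conj_mul (p : Fin n × ℕ) (σ σ' : Equiv.Perm (Fin n × ℕ)) (hσ : σ p = p) (hσ' : σ' p = p) :
    conjPerm p (σ * σ') (by simp [Equiv.Perm.mul_apply, hσ, hσ']) =
      conjPerm p σ hσ * conjPerm p σ' hσ' := by
  apply Equiv.ext; intro x
  simp only [conjPerm, Equiv.Perm.mul_apply, Equiv.coe_fn_mk]
  rw [f_g p (perm_ne hσ' (f_ne p x))]


lemma conj_trans (p : Fin n × ℕ) (σ : Equiv.Perm (Fin n × ℕ)) (hσ : σ p = p)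
    (h : IsEventualTranslation σ) : IsEventualTranslation (conjPerm p σ hσ) := by
  obtain ⟨m, F, hF⟩ := h
  refine ⟨m, F.image (gmap p) ∪ ({p.1} ×ˢ Finset.range (p.2 + (m p.1).natAbs + 2)), ?_⟩
  rintro ⟨i, k⟩ hx
  simp only [Finset.mem_union, Finset.mem_image, Finset.mem_product, Finset.mem_singleton,
    Finset.mem_range, not_or, not_and, not_lt] at hx
  obtain ⟨hx1, hx2⟩ := hx
  have hFx : fmap p (i, k) ∉ F := fun hmem => hx1 ⟨fmap p (i, k), hmem, g_f p (i, k)⟩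
  obtain ⟨h1, h2⟩ := hF (fmap p (i, k)) hFx
  simp only [conjPerm, Equiv.coe_fn_mk]
  by_cases hi : i = p.1
  · subst hi
    have hk : p.2 + (m p.1).natAbs + 2 ≤ k := hx2 rfl
    have hf : fmap p (p.1, k) = (p.1, k + 1) := if_pos ⟨rfl, by omega⟩
    rw [hf] at h1 h2
    simp only at h1 h2
    have hg : gmap p (σ (p.1, k + 1)) = (p.1, (σ (p.1, k + 1)).2 - 1) := by
      rw [show σ (p.1, k+1) = ((σ (p.1, k+1)).1, (σ (p.1, k+1)).2) from rfl, h1]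
      exact if_pos ⟨rfl, by omega⟩
    rw [hf, hg]
    constructor
    · rfl
    · simp only
      omega
  · have hf : fmap p (i, k) = (i, k) := if_neg (by simp [hi])
    rw [hf] at h1 h2
    have hg : gmap p (σ (i, k)) = σ (i, k) := if_neg (by simp only at h1; simp [h1, hi])
    rw [hf, hg]
    exact ⟨h1, h2⟩

lemma ext_trans (p : Fin n × ℕ) (τ : Equiv.Perm (Fin n × ℕ))
    (h : IsEventualTranslation τ) : IsEventualTranslation (extPerm p τ) := by
  obtain ⟨m, F, hF⟩ := h
  refine ⟨m, insert p (F.image (fmap p) ∪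
    ({p.1} ×ˢ Finset.range (p.2 + (m p.1).natAbs + 2))), ?_⟩
  rintro ⟨i, k⟩ hx
  simp only [Finset.mem_insert, Finset.mem_union, Finset.mem_image, Finset.mem_product,
    Finset.mem_singleton, Finset.mem_range, not_or, not_and, not_lt] at hx
  obtain ⟨hxp, hx1, hx2⟩ := hx
  have hne : (i, k) ≠ p := hxp
  have hFx : gmap p (i, k) ∉ F := fun hmem => hx1 ⟨gmap p (i, k), hmem, f_g p hne⟩
  obtain ⟨h1, h2⟩ := hF (gmap p (i, k)) hFx
  simp only [extPerm, Equiv.coe_fn_mk]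
  rw [if_neg hne]
  by_cases hi : i = p.1
  · subst hi
    have hk : p.2 + (m p.1).natAbs + 2 ≤ k := hx2 rfl
    have hg : gmap p (p.1, k) = (p.1, k - 1) := if_pos ⟨rfl, by omega⟩
    rw [hg] at h1 h2
    simp only at h1 h2
    have hf : fmap p (τ (p.1, k - 1)) = (p.1, (τ (p.1, k - 1)).2 + 1) := by
      rw [show τ (p.1, k-1) = ((τ (p.1, k-1)).1, (τ (p.1, k-1)).2) from rfl, h1]
      exact if_pos ⟨rfl, by omega⟩
    rw [hg, hf]
    exact ⟨rfl, by simp only; omega⟩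
  · have hg : gmap p (i, k) = (i, k) := if_neg (by simp [hi])
    rw [hg] at h1 h2
    have hf : fmap p (τ (i, k)) = τ (i, k) := if_neg (by simp only at h1; simp [h1, hi])
    rw [hg, hf]
    exact ⟨h1, h2⟩

end HoughtonAux

open HoughtonAux in
/-- The stabilizer of any point `p` in the Houghton group `H_n` (`n ≥ 1`) is isomorphic to
`H_n` itself, and has infinite index in `H_n` (index `0` in Mathlib's convention). -/
theorem houghton_stabilizer_iso_and_infinite_index (n : ℕ) (hn : 1 ≤ n) (p : Fin n × ℕ) :
    Nonempty (houghtonStabilizer n p ≃* HoughtonGroup n) ∧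
    (houghtonStabilizer n p).index = 0 := by
  constructor
  · refine ⟨{ toFun := fun σ => ⟨conjPerm p σ.1.1 σ.2, conj_trans p σ.1.1 σ.2 σ.1.2⟩
              invFun := fun τ => ⟨⟨extPerm p τ.1, ext_trans p τ.1 τ.2⟩,
                show extPerm p τ.1 p = p from if_pos rfl⟩
              left_inv := fun σ => Subtype.ext (Subtype.ext (Equiv.ext (ext_conj p σ.1.1 σ.2)))
              right_inv := fun τ => Subtype.ext (Equiv.ext (conj_ext p τ.1))
              map_mul' := fun a b => Subtype.ext (conj_mul p a.1.1 b.1.1 a.2 b.2) }⟩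
  · have hmem : ∀ k : ℕ, Equiv.swap p (p.1, k) ∈ HoughtonGroup n := by
      intro k
      refine ⟨0, {p, (p.1, k)}, fun x hx => ?_⟩
      simp only [Finset.mem_insert, Finset.mem_singleton, not_or] at hx
      rw [Equiv.swap_apply_of_ne_of_ne hx.1 hx.2]
      simp
    set τ : ℕ → HoughtonGroup n := fun k => ⟨Equiv.swap p (p.1, k), hmem k⟩ with hτ
    have hinj : Function.Injective
        (fun k => (QuotientGroup.mk (τ k) : HoughtonGroup n ⧸ houghtonStabilizer n p)) := by
      intro j k h
      rw [QuotientGroup.eq] at h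
      have h2 : (((τ j)⁻¹ * τ k : HoughtonGroup n) : Equiv.Perm (Fin n × ℕ)) p = p := h
      simp only [hτ, Subgroup.coe_mul, Subgroup.coe_inv, Equiv.Perm.mul_apply,
        Equiv.Perm.inv_def, Equiv.symm_swap, Equiv.swap_apply_left] at h2
      have h3 : Equiv.swap p (p.1, j) (p.1, k) = Equiv.swap p (p.1, j) (p.1, j) := by
        rw [h2, Equiv.swap_apply_right]
      have := (Equiv.swap p (p.1, j)).injective h3
      exact ((Prod.ext_iff.mp this).2).symm
    have : Infinite (HoughtonGroup n ⧸ houghtonStabilizer n p) := Infinite.of_injective _ hinj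
    rw [Subgroup.index]
    exact Nat.card_eq_zero_of_infinite
end

section
/- Fix n ≥ 1. The Houghton group H_n is not co-Hopfian: there exists an injective group homomorphism η : H_n → H_n that is not surjective. -/
/-- The Houghton group `H_n` (`n ≥ 1`) is not co-Hopfian: it admits an injective,
non-surjective group endomorphism. -/
theorem houghton_not_coHopfian (n : ℕ) (hn : 1 ≤ n) :
    ∃ η : HoughtonGroup n →* HoughtonGroup n,
      Function.Injective η ∧ ¬ Function.Surjective η := by
  classical
  let f : Fin n × ℕ ↪ Fin n × ℕ :=
    ⟨fun p => (p.1, p.2 + 1), by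
      rintro ⟨a1, a2⟩ ⟨b1, b2⟩ h
      simp only [Prod.mk.injEq] at h
      exact Prod.ext h.1 (by omega)⟩
  have hf : ∀ p, f p = (p.1, p.2 + 1) := fun _ => rfl
  have hrange : ∀ p : Fin n × ℕ, p ∈ Set.range f ↔ p.2 ≠ 0 := by
    rintro ⟨i, k⟩
    constructor
    · rintro ⟨⟨j, l⟩, h⟩
      simp only [hf, Prod.mk.injEq] at h
      omega
    · intro h
      have h' : k ≠ 0 := h
      refine ⟨(i, k - 1), ?_⟩
      show (i, k - 1 + 1) = (i, k)
      have h' : k ≠ 0 := h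
      rw [Nat.sub_add_cancel (by omega)]
  have hmem : ∀ σ : HoughtonGroup n,
      Equiv.Perm.viaEmbeddingHom f (σ : Equiv.Perm (Fin n × ℕ)) ∈ HoughtonGroup n := by
    rintro ⟨σ, m, F, hF⟩
    refine ⟨m, F.image f ∪ Finset.univ.image (fun i : Fin n => (i, 0)), ?_⟩
    rintro ⟨i, k⟩ hp
    simp only [Finset.mem_union, Finset.mem_image, Finset.mem_univ, true_and, not_or,
      not_exists, not_and] at hp
    obtain ⟨hp1, hp2⟩ := hp
    have hk : k ≠ 0 := by
      intro h
      exact (hp2 i) (by simp [h])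
    obtain ⟨l, hl⟩ : ∃ l, k = l + 1 := ⟨k - 1, by omega⟩
    have hnF : (i, l) ∉ F := by
      intro h
      exact hp1 (i, l) h (by simp [hf, hl])
    obtain ⟨h1, h2⟩ := hF (i, l) hnF
    have heq : (i, k) = f (i, l) := by simp [hf, hl]
    rw [heq, Equiv.Perm.viaEmbeddingHom_apply, Equiv.Perm.viaEmbedding_apply]
    simp only [hf] at *
    constructor
    · exact h1
    · push_cast
      omega
  refine ⟨MonoidHom.codRestrict ((Equiv.Perm.viaEmbeddingHom f).comp
    (HoughtonGroup n).subtype) (HoughtonGroup n) hmem, ?_, ?_⟩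
  · intro a b h
    have := congrArg Subtype.val h
    change Equiv.Perm.viaEmbeddingHom f (a : Equiv.Perm (Fin n × ℕ)) =
      Equiv.Perm.viaEmbeddingHom f (b : Equiv.Perm (Fin n × ℕ)) at this
    exact Subtype.ext ((Equiv.Perm.viaEmbeddingHom_injective f) this)
  · intro hsurj
    set i0 : Fin n := ⟨0, hn⟩
    have hτmem : Equiv.swap (i0, 0) (i0, 1) ∈ HoughtonGroup n := by
      refine ⟨0, {(i0, 0), (i0, 1)}, ?_⟩
      intro p hp
      simp only [Finset.mem_insert, Finset.mem_singleton, not_or] at hp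
      rw [Equiv.swap_apply_of_ne_of_ne hp.1 hp.2]
      simp
    obtain ⟨σ, hσ⟩ := hsurj ⟨_, hτmem⟩
    have h0 : ((i0, 0) : Fin n × ℕ) ∉ Set.range f := by
      rw [hrange]; simp
    have := congrArg Subtype.val hσ
    change Equiv.Perm.viaEmbeddingHom f (σ : Equiv.Perm (Fin n × ℕ)) =
      Equiv.swap (i0, 0) (i0, 1) at this
    have h1 : Equiv.Perm.viaEmbeddingHom f (σ : Equiv.Perm (Fin n × ℕ)) (i0, 0) = (i0, 0) :=
      Equiv.Perm.viaEmbedding_apply_of_notMem _ f _ h0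
    rw [this, Equiv.swap_apply_left] at h1
    simp at h1
end

section
/- Fix n ≥ 1. The Houghton group H_n is dis-co-Hopfian: there exists an injective group homomorphism η : H_n → H_n such that the intersection over all k ≥ 1 of the iterated images η^k(H_n) is the trivial subgroup, i.e. ⋂_{k=1}^{∞} η^k(H_n) = {1}. -/
namespace HoughtonAux

/-- The shift embedding `(i,k) ↦ (i,k+1)`. -/
def shiftEmb (n : ℕ) : (Fin n × ℕ) ↪ (Fin n × ℕ) :=
  ⟨fun p => (p.1, p.2 + 1), by rintro ⟨a1, a2⟩ ⟨b1, b2⟩ h; simpa using h⟩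

lemma via_mem {n : ℕ} (σ : Equiv.Perm (Fin n × ℕ)) (h : σ ∈ HoughtonGroup n) :
    σ.viaEmbedding (shiftEmb n) ∈ HoughtonGroup n := by
  obtain ⟨m, F, hF⟩ := h
  refine ⟨m, F.image (shiftEmb n) ∪ Finset.univ ×ˢ {0}, fun p hp => ?_⟩
  simp only [Finset.mem_union, Finset.mem_image, Finset.mem_product, Finset.mem_univ,
    Finset.mem_singleton, not_or, not_exists, not_and, true_and] at hp
  obtain ⟨hp1, hp2⟩ := hp
  obtain ⟨q, rfl⟩ : ∃ q, p = shiftEmb n q := by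
    refine ⟨(p.1, p.2 - 1), ?_⟩
    cases p with
    | mk i k =>
      cases k with
      | zero => exact absurd rfl hp2
      | succ k => rfl
  have hq : q ∉ F := fun hq => hp1 q hq rfl
  obtain ⟨h1, h2⟩ := hF q hq
  rw [Equiv.Perm.viaEmbedding_apply]
  constructor
  · exact h1
  · show ((σ q).2 + 1 : ℤ) = (q.2 + 1 : ℕ) + m q.1
    push_cast
    omega

/-- The injective endomorphism of the Houghton group. -/
noncomputable def eta (n : ℕ) : HoughtonGroup n →* HoughtonGroup n where
  toFun σ := ⟨(σ : Equiv.Perm (Fin n × ℕ)).viaEmbedding (shiftEmb n), via_mem _ σ.2⟩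
  map_one' := by
    ext1
    exact (Equiv.Perm.viaEmbeddingHom (shiftEmb n)).map_one
  map_mul' a b := by
    ext1
    exact (Equiv.Perm.viaEmbeddingHom (shiftEmb n)).map_mul _ _

lemma eta_injective (n : ℕ) : Function.Injective (eta n) := by
  intro a b h
  have := congrArg Subtype.val h
  exact Subtype.ext (Equiv.Perm.viaEmbeddingHom_injective (shiftEmb n) this)

/-- `eta` as a `Monoid.End`. -/
noncomputable def etaEnd (n : ℕ) : Monoid.End (HoughtonGroup n) := eta n

lemma fix_of_mem_range (n : ℕ) : ∀ (m : ℕ) (σ : HoughtonGroup n),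
    σ ∈ ((etaEnd n ^ m) :
      HoughtonGroup n →* HoughtonGroup n).range →
    ∀ p : Fin n × ℕ, p.2 < m → (σ : Equiv.Perm (Fin n × ℕ)) p = p := by
  intro m
  induction m with
  | zero => intro σ _ p hp; omega
  | succ m ih =>
    rintro σ ⟨τ, rfl⟩ p hp
    have hpow : (etaEnd n ^ (m + 1)) τ =
        eta n ((etaEnd n ^ m) τ) := by
      rw [pow_succ' (etaEnd n) m]; rfl
    refine (congrArg (fun x : HoughtonGroup n => (x : Equiv.Perm (Fin n × ℕ)) p) hpow).trans ?_
    set ρ := (etaEnd n ^ m) τ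
    show (ρ : Equiv.Perm (Fin n × ℕ)).viaEmbedding (shiftEmb n) p = p
    rcases Nat.eq_zero_or_pos p.2 with h0 | h0
    · apply Equiv.Perm.viaEmbedding_apply_of_notMem
      rintro ⟨q, hq⟩
      have : q.2 + 1 = p.2 := congrArg Prod.snd hq
      omega
    · obtain ⟨q, rfl⟩ : ∃ q, p = shiftEmb n q :=
        ⟨(p.1, p.2 - 1), by cases p with
          | mk i k => cases k with
            | zero => omega
            | succ k => rfl⟩
      rw [Equiv.Perm.viaEmbedding_apply]
      have hq : (ρ : Equiv.Perm (Fin n × ℕ)) q = q := by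
        refine ih ρ ⟨τ, rfl⟩ q ?_
        have : q.2 + 1 < m + 1 := hp
        omega
      rw [hq]

end HoughtonAux

/-- The Houghton group `H_n` (`n ≥ 1`) is dis-co-Hopfian: it admits an injective group
endomorphism `η` such that the intersection of the iterated images `η^k(H_n)`, `k ≥ 1`,
is the trivial subgroup. -/
theorem houghton_disCoHopfian (n : ℕ) (hn : 1 ≤ n) :
    ∃ η : Monoid.End (HoughtonGroup n),
      Function.Injective η ∧
      (⨅ k : ℕ, MonoidHom.range ((η ^ (k + 1) : Monoid.End (HoughtonGroup n)) :
        HoughtonGroup n →* HoughtonGroup n)) = ⊥ := by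
  refine ⟨HoughtonAux.etaEnd n, HoughtonAux.eta_injective n, ?_⟩
  rw [eq_bot_iff]
  intro σ hσ
  simp only [Subgroup.mem_iInf] at hσ
  have hfix : ∀ p : Fin n × ℕ, (σ : Equiv.Perm (Fin n × ℕ)) p = p := fun p =>
    HoughtonAux.fix_of_mem_range n (p.2 + 1) σ (hσ p.2) p (by omega)
  have : σ = 1 := Subtype.ext (Equiv.ext hfix)
  simp [this]
end
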